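/- The transform B_q[φ](x) := x^(-2q) ∫₀^∞ e^(-t/x) e^t φ(t) t^(2q-1) e^(-t) dt maps L¹((0,∞), t^(2q-1) e^(-t) dt) into holomorphic functions on the disk B = {x ∈ ℂ : |x - 1/2| < 1/2}. -/

import Mathlib

open MeasureTheory

noncomputable def Bq (q : ℂ) (φ : ℝ → ℂ) (x : ℂ) : ℂ :=
  x ^ (-2 * q) * ∫ t in Set.Ioi (0:ℝ),
    Complex.exp (-(t:ℂ) / x) * Complex.exp (t:ℂ) * φ t * (t:ℂ) ^ (2 * q - 1) *
      Complex.exp (-(t:ℂ))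

lemma mem_disk' {x : ℂ} (hx : ‖x - 1/2‖ < 1/2) :
    0 < x.re ∧ 1 < (x⁻¹).re := by
  have h2 : ‖x - 1/2‖ ^ 2 < (1/2 : ℝ) ^ 2 := by
    apply pow_lt_pow_left₀ hx (norm_nonneg _) (by norm_num)
  rw [Complex.sq_norm, Complex.normSq_apply] at h2
  simp only [Complex.sub_re, Complex.sub_im] at h2
  have hre : ((1:ℂ)/2).re = 1/2 := by norm_num
  have him : ((1:ℂ)/2).im = 0 := by norm_num
  rw [hre, him] at h2
  have key : x.re * x.re + x.im * x.im < x.re := by nlinarith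
  have ha : 0 < x.re := by nlinarith [mul_self_nonneg x.re, mul_self_nonneg x.im]
  refine ⟨ha, ?_⟩
  have hx0 : x ≠ 0 := fun h => by simp [h] at ha
  have hns : 0 < Complex.normSq x := Complex.normSq_pos.mpr hx0
  rw [Complex.inv_re, one_lt_div hns, Complex.normSq_apply]
  exact key

lemma aux_texp {a t : ℝ} (ha : 0 < a) (ht : 0 ≤ t) :
    t * Real.exp (-(a * t)) ≤ a⁻¹ := by
  have h1 : a * t ≤ Real.exp (a * t) := by
    have := Real.add_one_le_exp (a * t); linarith
  have h2 := mul_le_mul_of_nonneg_right h1 (Real.exp_pos (-(a * t))).le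
  rw [← Real.exp_add, add_neg_cancel, Real.exp_zero] at h2
  have h3 : a * a⁻¹ = 1 := mul_inv_cancel₀ ha.ne'
  nlinarith [Real.exp_pos (-(a * t))]

theorem Bq_maps_L1_to_holomorphic (q : ℂ) (hq : 0 < q.re) (φ : ℝ → ℂ)
    (hφ : IntegrableOn (fun t : ℝ => φ t * (t:ℂ) ^ (2 * q - 1) * (Real.exp (-t) : ℂ))
      (Set.Ioi 0)) :
    DifferentiableOn ℂ (Bq q φ) {x : ℂ | ‖x - 1/2‖ < 1/2} := by
  set S : Set ℂ := {x : ℂ | ‖x - 1/2‖ < 1/2} with hS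
  have hSopen : IsOpen S := by
    have : S = (fun x : ℂ => x - 1/2) ⁻¹' Metric.ball 0 (1/2) := by
      ext x; simp [hS, Metric.mem_ball, Complex.dist_eq]
    rw [this]
    exact Metric.isOpen_ball.preimage (by continuity)
  intro x₀ hx₀
  apply DifferentiableAt.differentiableWithinAt
  obtain ⟨ε, hε, hball⟩ := Metric.isOpen_iff.mp hSopen x₀ hx₀
  set ε' := ε / 2 with hε'
  have hε'pos : 0 < ε' := by positivity
  have hK : Metric.closedBall x₀ ε' ⊆ S := fun y hy =>
    hball (lt_of_le_of_lt (Metric.mem_closedBall.mp hy) (by rw [hε']; linarith))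
  set K := Metric.closedBall x₀ ε' with hKdef
  have hKc : IsCompact K := isCompact_closedBall _ _
  have hKne : K.Nonempty := ⟨x₀, Metric.mem_closedBall_self hε'pos.le⟩
  have hKne0 : ∀ y ∈ K, y ≠ 0 := fun y hy h0 => by
    have := (mem_disk' (hK hy)).1; simp [h0] at this
  have hcont1 : ContinuousOn (fun y : ℂ => (y⁻¹).re) K :=
    Complex.continuous_re.comp_continuousOn (ContinuousOn.inv₀ continuousOn_id hKne0)
  obtain ⟨xm, hxmK, hxm⟩ := hKc.exists_isMinOn hKne hcont1
  set r := (xm⁻¹).re with hr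
  have hr1 : 1 < r := (mem_disk' (hK hxmK)).2
  have hrle : ∀ y ∈ K, r ≤ (y⁻¹).re := fun y hy => hxm hy
  obtain ⟨xd, hxdK, hxd⟩ := hKc.exists_isMinOn hKne (continuous_norm.continuousOn)
  set δ := ‖xd‖ with hδ
  have hδpos : 0 < δ := by
    simpa [hδ, norm_pos_iff] using hKne0 xd hxdK
  have hδle : ∀ y ∈ K, δ ≤ ‖y‖ := fun y hy => hxd hy
  set μ := volume.restrict (Set.Ioi (0:ℝ)) with hμ
  set g : ℝ → ℂ := fun t => φ t * (t:ℂ) ^ (2 * q - 1) * (Real.exp (-t) : ℂ) with hg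
  have hgm : AEStronglyMeasurable g μ := hφ.aestronglyMeasurable
  set F : ℂ → ℝ → ℂ := fun x t =>
    Complex.exp (-(t:ℂ) / x) * Complex.exp (t:ℂ) * φ t * (t:ℂ) ^ (2 * q - 1) *
      Complex.exp (-(t:ℂ)) with hF
  set F' : ℂ → ℝ → ℂ := fun x t =>
    Complex.exp (-(t:ℂ) / x) * ((t:ℂ) / x ^ 2) * Complex.exp (t:ℂ) * φ t *
      (t:ℂ) ^ (2 * q - 1) * Complex.exp (-(t:ℂ)) with hF'
  have hFeq : ∀ x : ℂ, (fun t : ℝ =>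
      (Complex.exp (-(t:ℂ) / x) * Complex.exp (t:ℂ)) * g t) = F x := by
    intro x; funext t
    simp only [hF, hg]
    rw [Complex.ofReal_exp, Complex.ofReal_neg]
    ring
  have hFmeas : ∀ x : ℂ, AEStronglyMeasurable (F x) μ := by
    intro x
    have hc : Continuous fun t : ℝ => Complex.exp (-(t:ℂ) / x) * Complex.exp (t:ℂ) := by
      fun_prop
    exact (hFeq x) ▸ (hc.aestronglyMeasurable.mul hgm)
  have hF'meas : AEStronglyMeasurable (F' x₀) μ := by
    have hc : Continuous fun t : ℝ =>
        Complex.exp (-(t:ℂ) / x₀) * ((t:ℂ) / x₀ ^ 2) * Complex.exp (t:ℂ) := by fun_prop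
    apply (hc.aestronglyMeasurable.mul hgm).congr
    filter_upwards with t
    simp only [Pi.mul_apply, hF', hg]
    rw [Complex.ofReal_exp, Complex.ofReal_neg]
    ring
  have hre : ∀ (t : ℝ) (x : ℂ), (-(t:ℂ) / x).re = -(t * (x⁻¹).re) := by
    intro t x
    rw [div_eq_mul_inv]
    simp [Complex.mul_re]
  have hnormF : ∀ (t : ℝ), 0 ≤ t → ∀ x : ℂ,
      ‖F x t‖ = Real.exp (-(t * (x⁻¹).re)) * Real.exp t *
        (‖φ t‖ * ‖(t:ℂ) ^ (2 * q - 1)‖ * Real.exp (-t)) := by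
    intro t ht x
    simp only [hF, norm_mul, Complex.norm_exp, hre]
    simp only [Complex.ofReal_re, Complex.neg_re]
    ring
  have hnormF' : ∀ (t : ℝ), 0 ≤ t → ∀ x : ℂ,
      ‖F' x t‖ = Real.exp (-(t * (x⁻¹).re)) * (t / ‖x‖ ^ 2) * Real.exp t *
        (‖φ t‖ * ‖(t:ℂ) ^ (2 * q - 1)‖ * Real.exp (-t)) := by
    intro t ht x
    simp only [hF', norm_mul, Complex.norm_exp, hre, norm_div, norm_pow,
      Complex.norm_real, Real.norm_eq_abs, abs_of_nonneg ht]
    simp only [Complex.ofReal_re, Complex.neg_re]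
    ring
  have hgnorm : ∀ t : ℝ, ‖g t‖ = ‖φ t‖ * ‖(t:ℂ) ^ (2 * q - 1)‖ * Real.exp (-t) := by
    intro t
    simp only [hg, norm_mul, Complex.norm_real, Real.norm_eq_abs, Real.abs_exp]
  have hexp_le : ∀ (t : ℝ), 0 ≤ t → ∀ c : ℝ, r ≤ c →
      Real.exp (-(t * c)) * Real.exp t ≤ Real.exp (-((r - 1) * t)) := by
    intro t ht c hc
    rw [← Real.exp_add]
    apply Real.exp_le_exp.mpr
    nlinarith
  have hx₀K : x₀ ∈ K := Metric.mem_closedBall_self hε'pos.le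
  have haet : ∀ᵐ t ∂μ, t ∈ Set.Ioi (0:ℝ) := ae_restrict_mem measurableSet_Ioi
  have hφ' : Integrable g μ := hφ
  have hFint : Integrable (F x₀) μ := by
    apply hφ'.mono (hFmeas x₀)
    filter_upwards [haet] with t ht
    have ht' : (0:ℝ) ≤ t := le_of_lt ht
    rw [hnormF t ht' x₀, show ‖(fun t : ℝ => φ t * (t:ℂ) ^ (2 * q - 1) *
      (Real.exp (-t) : ℂ)) t‖ = ‖g t‖ from rfl, hgnorm t]
    have h1 : Real.exp (-(t * (x₀⁻¹).re)) * Real.exp t ≤ 1 := by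
      calc Real.exp (-(t * (x₀⁻¹).re)) * Real.exp t
          ≤ Real.exp (-((r - 1) * t)) := hexp_le t ht' _ (hrle x₀ hx₀K)
        _ ≤ 1 := Real.exp_le_one_iff.mpr (by nlinarith)
    have h2 : 0 ≤ ‖φ t‖ * ‖(t:ℂ) ^ (2 * q - 1)‖ * Real.exp (-t) := by positivity
    have h3 := mul_le_mul_of_nonneg_right h1 h2
    rw [one_mul] at h3
    exact h3
  set C : ℝ := ((r - 1) * δ ^ 2)⁻¹ with hC
  have hbound : ∀ᵐ t ∂μ, ∀ x ∈ Metric.ball x₀ ε', ‖F' x t‖ ≤ C * ‖g t‖ := by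
    filter_upwards [haet] with t ht x hx
    have ht' : (0:ℝ) ≤ t := le_of_lt ht
    have hxK : x ∈ K := Metric.ball_subset_closedBall hx
    have hcx : r ≤ (x⁻¹).re := hrle x hxK
    have hdx : δ ≤ ‖x‖ := hδle x hxK
    rw [hnormF' t ht' x, hgnorm t]
    set A := ‖φ t‖ * ‖(t:ℂ) ^ (2 * q - 1)‖ with hA
    have hA0 : 0 ≤ A := by positivity
    have step1 : Real.exp (-(t * (x⁻¹).re)) * (t / ‖x‖ ^ 2) * Real.exp t
        ≤ (t * Real.exp (-((r - 1) * t))) / δ ^ 2 := by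
      have h1 := hexp_le t ht' _ hcx
      have h2 : t / ‖x‖ ^ 2 ≤ t / δ ^ 2 := by
        have hδ2 : (0:ℝ) < δ ^ 2 := pow_pos hδpos 2
        have hxx : δ ^ 2 ≤ ‖x‖ ^ 2 := by nlinarith [norm_nonneg x]
        exact div_le_div_of_nonneg_left ht' hδ2 hxx
      calc Real.exp (-(t * (x⁻¹).re)) * (t / ‖x‖ ^ 2) * Real.exp t
          = (Real.exp (-(t * (x⁻¹).re)) * Real.exp t) * (t / ‖x‖ ^ 2) := by ring
        _ ≤ Real.exp (-((r - 1) * t)) * (t / δ ^ 2) := by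
            apply mul_le_mul h1 h2 (by positivity) (Real.exp_pos _).le
        _ = (t * Real.exp (-((r - 1) * t))) / δ ^ 2 := by ring
    have step2 : (t * Real.exp (-((r - 1) * t))) / δ ^ 2 ≤ C := by
      rw [hC, mul_inv]
      have h3 := aux_texp (a := r - 1) (by linarith) ht'
      calc (t * Real.exp (-((r - 1) * t))) / δ ^ 2
          ≤ (r - 1)⁻¹ / δ ^ 2 := by gcongr
        _ = (r - 1)⁻¹ * (δ ^ 2)⁻¹ := by rw [div_eq_mul_inv]
    exact mul_le_mul_of_nonneg_right (step1.trans step2) (by positivity)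
  have hbint : Integrable (fun t => C * ‖g t‖) μ := hφ.norm.const_mul C
  have hdiff : ∀ᵐ t ∂μ, ∀ x ∈ Metric.ball x₀ ε', HasDerivAt (F · t) (F' x t) x := by
    filter_upwards with t x hx
    have hx0 : x ≠ 0 := hKne0 x (Metric.ball_subset_closedBall hx)
    have h0 : HasDerivAt (fun x : ℂ => -(t:ℂ) / x) ((t:ℂ) / x ^ 2) x := by
      have h : HasDerivAt (fun y : ℂ => -(t:ℂ) * y⁻¹) (-(t:ℂ) * -(x ^ 2)⁻¹) x :=
        (hasDerivAt_inv hx0).const_mul (-(t:ℂ))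
      simp only [div_eq_mul_inv]
      convert h using 1
      ring
    have h1 := h0.cexp
    exact ((((h1.mul_const (Complex.exp (t:ℂ))).mul_const (φ t)).mul_const
      ((t:ℂ) ^ (2 * q - 1))).mul_const (Complex.exp (-(t:ℂ))))
  have main := hasDerivAt_integral_of_dominated_loc_of_deriv_le (Metric.ball_mem_nhds x₀ hε'pos)
    (Filter.Eventually.of_forall hFmeas) hFint hF'meas hbound hbint hdiff
  have hInt : DifferentiableAt ℂ (fun x => ∫ t, F x t ∂μ) x₀ := main.2.differentiableAt
  have hcpow : DifferentiableAt ℂ (fun x : ℂ => x ^ (-2 * q)) x₀ := by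
    apply DifferentiableAt.cpow differentiableAt_id (differentiableAt_const _)
    exact Or.inl (mem_disk' hx₀).1
  exact hcpow.mul hInt
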